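/- Suppose a ∈ C_j^{(d_1, r)} for some 0 ≤ j ≤ d_1 − 1 and b = 0. Then the Hamming weight of c(a, b) equals (q−1)n_1 n_2/q − ((q−1) d_1 n_2/(q N_1)) · η_j^{(d_1, r)} (equality after casting the weight into ℂ). -/

import Mathlib

/-- The canonical additive character `ψ(x) = e^{2πi·Tr_{F/F_p}(x)/p}` of a finite field `F`
of characteristic `p`. -/
noncomputable def psi (p : ℕ) (F : Type*) [Field F] [Fintype F] [Algebra (ZMod p) F]
    (x : F) : ℂ :=
  Complex.exp (2 * (Real.pi : ℂ) * Complex.I * ((Algebra.trace (ZMod p) F x).val : ℂ) / (p : ℂ))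

/-- The cyclotomic class `C_i^{(N,r)} = α^i ⟨α^N⟩` in a finite field. -/
def cClass (F : Type*) [Field F] (α : Fˣ) (N i : ℕ) : Set F :=
  {x | ∃ t : ℕ, x = ((α ^ (i + N * t) : Fˣ) : F)}

/-- The Gauss period `η_i^{(N,r)} = Σ_{x ∈ C_i^{(N,r)}} ψ(x)`. -/
noncomputable def gaussPeriod (p : ℕ) (F : Type*) [Field F] [Fintype F] [Algebra (ZMod p) F]
    (α : Fˣ) (N i : ℕ) : ℂ :=
  ∑ t ∈ Finset.range ((Fintype.card F - 1) / N), psi p F ((α ^ (i + N * t) : Fˣ) : F)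

namespace Stmt3Aux

noncomputable def eC (p : ℕ) (n : ℕ) : ℂ :=
  Complex.exp (2 * (Real.pi : ℂ) * Complex.I * (n : ℂ) / (p : ℂ))

lemma psi_eq (p : ℕ) (F : Type*) [Field F] [Fintype F] [Algebra (ZMod p) F] (x : F) :
    psi p F x = eC p ((Algebra.trace (ZMod p) F x).val) := rfl

lemma eC_add (p a b : ℕ) : eC p (a + b) = eC p a * eC p b := by
  rw [eC, eC, eC, ← Complex.exp_add]
  congr 1
  push_cast
  ring

lemma eC_p_mul (p : ℕ) (hp : p ≠ 0) (k : ℕ) : eC p (p * k) = 1 := by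
  have hp' : (p : ℂ) ≠ 0 := Nat.cast_ne_zero.mpr hp
  rw [eC, show 2 * (Real.pi : ℂ) * Complex.I * ((p * k : ℕ) : ℂ) / (p : ℂ)
      = (k : ℤ) * (2 * (Real.pi : ℂ) * Complex.I) by push_cast; field_simp]
  exact Complex.exp_int_mul_two_pi_mul_I k

lemma eC_mod (p : ℕ) (hp : p ≠ 0) (a : ℕ) : eC p a = eC p (a % p) := by
  conv_lhs => rw [← Nat.div_add_mod a p]
  rw [eC_add, eC_p_mul p hp, one_mul]

lemma eC_one_ne_one (p : ℕ) (hp : 1 < p) : eC p 1 ≠ 1 := by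
  have h0 : (p : ℕ) ≠ 0 := by omega
  have := Complex.isPrimitiveRoot_exp p h0
  have h : eC p 1 = Complex.exp (2 * Real.pi * Complex.I / p) := by
    rw [eC]; congr 1; push_cast; ring
  rw [h]
  exact this.ne_one hp

variable (p : ℕ) [Fact p.Prime] (F : Type*) [Field F] [Fintype F] [Algebra (ZMod p) F]

lemma psi_zero : psi p F 0 = 1 := by
  rw [psi_eq, map_zero, ZMod.val_zero, eC]
  simp

lemma psi_add (x y : F) : psi p F (x + y) = psi p F x * psi p F y := by
  haveI : NeZero p := ⟨(Fact.out : p.Prime).ne_zero⟩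
  rw [psi_eq, psi_eq, psi_eq, map_add, ZMod.val_add, ← eC_mod p (Fact.out : p.Prime).ne_zero,
    eC_add]

lemma sum_psi_eq_zero : ∑ z : F, psi p F z = 0 := by
  haveI := charP_of_injective_algebraMap' (A := F) (ZMod p) p
  obtain ⟨x₀, hx₀⟩ := Algebra.trace_surjective (ZMod p) F 1
  have hkey : ∀ z : F, psi p F (z + x₀) = psi p F z * eC p 1 := by
    intro z
    rw [psi_add, psi_eq p F x₀, hx₀, ZMod.val_one]
  have hshift : (∑ z : F, psi p F z) * eC p 1 = ∑ z : F, psi p F z := by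
    rw [Finset.sum_mul]
    simp_rw [← hkey]
    exact Fintype.sum_equiv (Equiv.addRight x₀) _ _ fun z => rfl
  have hne := eC_one_ne_one p (Fact.out : p.Prime).one_lt
  have h0 : (∑ z : F, psi p F z) * (eC p 1 - 1) = 0 := by
    rw [mul_sub, hshift, mul_one, sub_self]
  exact (mul_eq_zero.mp h0).resolve_right (sub_ne_zero.mpr hne)

lemma sum_psi_mul [DecidableEq F] (c : F) :
    ∑ y : F, psi p F (y * c) = if c = 0 then (Fintype.card F : ℂ) else 0 := by
  split_ifs with hc
  · subst hc; simp [psi_zero, mul_zero]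
  · rw [← sum_psi_eq_zero p F]
    exact Fintype.sum_equiv (Equiv.mulRight₀ c hc) _ _ fun y => rfl

open Finset Subgroup

lemma sum_comp_hom {G H : Type*} [Group G] [Fintype G] [Group H] [Fintype H] [DecidableEq H]
    (φ : G →* H) (f : H → ℂ) :
    ∑ g : G, f (φ g) = (Nat.card φ.ker : ℂ) * ∑ h ∈ univ.filter (· ∈ φ.range), f h := by
  classical
  rw [Finset.sum_comp f φ]
  have himg : (univ : Finset G).image φ = univ.filter (· ∈ φ.range) := by
    ext h
    simp [MonoidHom.mem_range, eq_comm]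
  rw [himg, Finset.mul_sum]
  refine Finset.sum_congr rfl fun h hh => ?_
  rw [Finset.mem_filter] at hh
  obtain ⟨g₀, hg₀⟩ := hh.2
  have hcard : #{a ∈ (univ : Finset G) | φ a = h} = Nat.card φ.ker := by
    have he : φ.ker ≃ {g : G // φ g = h} :=
      { toFun := fun k => ⟨g₀ * k, by
          have hk1 : φ (↑k : G) = 1 := MonoidHom.mem_ker.mp k.2
          rw [map_mul, hk1, mul_one, hg₀]⟩
        invFun := fun g => ⟨g₀⁻¹ * g, by
          rw [MonoidHom.mem_ker, map_mul, map_inv, hg₀, g.2, inv_mul_cancel]⟩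
        left_inv := fun k => by ext; simp
        right_inv := fun g => by ext; simp }
    rw [Nat.card_congr he, Nat.card_eq_fintype_card, Fintype.card_subtype]
  rw [hcard, nsmul_eq_mul]

lemma subgroup_eq_of_card_eq {G : Type*} [Group G] [Fintype G] [IsCyclic G]
    {S T : Subgroup G} (h : Nat.card S = Nat.card T) : S = T := by
  classical
  set n := Nat.card S with hn
  have hn0 : 0 < n := Nat.card_pos
  have key : ∀ U : Subgroup G, Nat.card U = n → ∀ x : G, x ∈ U ↔ x ^ n = 1 := by
    intro U hU x
    have hsub : (univ.filter (· ∈ U)) ⊆ (univ.filter (fun a : G => a ^ n = 1)) := by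
      intro y hy
      rw [mem_filter] at hy ⊢
      refine ⟨mem_univ _, ?_⟩
      have : (⟨y, hy.2⟩ : U) ^ n = 1 := by
        rw [← hU]; exact pow_card_eq_one'
      simpa [Subtype.ext_iff] using this
    have hle : #{a : G | a ^ n = 1} ≤ n := IsCyclic.card_pow_eq_one_le hn0
    have hcardU : #(univ.filter (· ∈ U)) = n := by
      rw [← hU, Nat.card_eq_fintype_card, Fintype.card_subtype]
    have heq : (univ.filter (· ∈ U)) = (univ.filter (fun a : G => a ^ n = 1)) :=
      Finset.eq_of_subset_of_card_le hsub (by rw [hcardU]; exact hle)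
    constructor
    · intro hx
      have : x ∈ univ.filter (fun a : G => a ^ n = 1) := heq ▸ (mem_filter.mpr ⟨mem_univ _, hx⟩)
      exact (mem_filter.mp this).2
    · intro hx
      have : x ∈ univ.filter (· ∈ U) := heq ▸ (mem_filter.mpr ⟨mem_univ _, hx⟩)
      exact (mem_filter.mp this).2
  ext x
  rw [key S rfl, key T h.symm]

lemma sum_filter_zpowers {G : Type*} [Group G] [Fintype G] [DecidableEq G] (x : G) (f : G → ℂ) :
    ∑ h ∈ univ.filter (· ∈ zpowers x), f h = ∑ t ∈ range (orderOf x), f (x ^ t) := by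
  classical
  have himg : (range (orderOf x)).image (x ^ ·) = univ.filter (· ∈ zpowers x) := by
    ext h
    simp only [mem_image, mem_range, mem_filter, mem_univ, true_and]
    constructor
    · rintro ⟨t, _, rfl⟩
      exact ⟨(t : ℤ), by simp⟩
    · intro hh
      obtain ⟨t, rfl⟩ := mem_powers_iff_mem_zpowers.mpr hh
      exact ⟨t % orderOf x, Nat.mod_lt _ (orderOf_pos x), pow_mod_orderOf x t⟩
  rw [← himg, Finset.sum_image]
  intro a ha b hb hab
  exact pow_injOn_Iio_orderOf (by simpa using mem_range.mp ha) (by simpa using mem_range.mp hb) hab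

lemma sum_range_mul_of_periodic (T : ℕ → ℂ) (n k : ℕ) (h : ∀ t, T (t + n) = T t) :
    ∑ t ∈ range (n * k), T t = (k : ℂ) * ∑ t ∈ range n, T t := by
  have hiter : ∀ k j, T (n * k + j) = T j := by
    intro k
    induction k with
    | zero => simp
    | succ k ih =>
      intro j
      have : n * (k + 1) + j = (n * k + j) + n := by ring
      rw [this, h, ih]
  induction k with
  | zero => simp
  | succ k ih =>
    rw [Nat.mul_succ, Finset.sum_range_add, ih]
    have : ∑ i ∈ range n, T (n * k + i) = ∑ i ∈ range n, T i :=
      Finset.sum_congr rfl fun i _ => hiter k i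
    rw [this]
    push_cast
    ring

lemma sum_K_split {K : Type*} [Field K] [Fintype K] [DecidableEq K] (g : K → ℂ) :
    ∑ y : K, g y = g 0 + ∑ v : Kˣ, g ↑v := by
  classical
  rw [show (univ : Finset K) = insert 0 (univ.erase 0) from (Finset.insert_erase (mem_univ 0)).symm,
    Finset.sum_insert (Finset.notMem_erase _ _)]
  congr 1
  refine Finset.sum_bij' (fun y hy => Units.mk0 y (Finset.ne_of_mem_erase hy))
    (fun (v : Kˣ) _ => (v : K)) ?_ ?_ ?_ ?_ ?_
  · intro y hy; exact mem_univ _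
  · intro v _; exact Finset.mem_erase.mpr ⟨v.ne_zero, mem_univ _⟩
  · intro y hy; rfl
  · intro v _; exact Units.ext rfl
  · intro y hy; rfl


lemma psi_congr (p : ℕ) (F K : Type*) [Field F] [Fintype F] [Algebra (ZMod p) F]
    [Field K] [Fintype K] [Algebra (ZMod p) K] (x : F) (y : K)
    (h : Algebra.trace (ZMod p) F x = Algebra.trace (ZMod p) K y) :
    psi p F x = psi p K y := by
  rw [psi_eq, psi_eq, h]

end Stmt3Aux

open Finset Subgroup Stmt3Aux

/-- if `a ∈ C_j^{(d₁,r)}` and `b = 0`, the weight of `c(a,b)` is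
`(q-1)n₁n₂/q - ((q-1)d₁n₂/(qN₁))·η_j^{(d₁,r)}`. -/
theorem stmt3 (p s m : ℕ) [Fact p.Prime] (hs : 0 < s) (hm : 0 < m)
    (K F : Type*) [Field K] [Fintype K] [DecidableEq K] [Field F] [Fintype F]
    [Algebra (ZMod p) F] [Algebra K F]
    (hq : Fintype.card K = p ^ s) (hr : Fintype.card F = Fintype.card K ^ m)
    (α : Fˣ) (hα : ∀ x : Fˣ, x ∈ Subgroup.zpowers α)
    (g₁ g₂ : Fˣ) (n₁ n₂ : ℕ) (h₁ : orderOf g₁ = n₁) (h₂ : orderOf g₂ = n₂)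
    (hcop : Nat.Coprime n₁ n₂)
    (N₀ N₁ N₂ d₁ d₂ d : ℕ)
    (hN₀ : N₀ = (Fintype.card F - 1) / (Fintype.card K - 1))
    (hN₁ : N₁ = (Fintype.card F - 1) / n₁)
    (hN₂ : N₂ = (Fintype.card F - 1) / n₂)
    (hd₁ : d₁ = Nat.gcd N₀ N₁) (hd₂ : d₂ = Nat.gcd N₀ N₂)
    (hd : d = Nat.gcd (N₀ * N₂ / d₂) N₁)
    (a b : F) (j : ℕ) (hj : j < d₁) (ha : a ∈ cClass F α d₁ j) (hb : b = 0) :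
    (hammingNorm (fun t : Fin (n₁ * n₂) =>
        Algebra.trace K F (a * (g₁ : F) ^ (t : ℕ) + b * (g₂ : F) ^ (t : ℕ))) : ℂ)
      = ((Fintype.card K : ℂ) - 1) * (n₁ : ℂ) * (n₂ : ℂ) / (Fintype.card K : ℂ)
        - ((Fintype.card K : ℂ) - 1) * (d₁ : ℂ) * (n₂ : ℂ)
            / ((Fintype.card K : ℂ) * (N₁ : ℂ)) * gaussPeriod p F α d₁ j := by
  classical
  subst hb
  -- instances
  haveI : CharP F p := charP_of_injective_algebraMap' (A := F) (ZMod p) p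
  haveI : CharP K p := (algebraMap K F).charP (algebraMap K F).injective p
  letI : Algebra (ZMod p) K := ZMod.algebra K p
  haveI : IsScalarTower (ZMod p) K F :=
    IsScalarTower.of_algebraMap_eq' (RingHom.ext_zmod _ _)
  -- notation
  set q : ℕ := Fintype.card K with hqdef
  set M : ℕ := Fintype.card F - 1 with hMdef
  have hq2 : 1 < q := Fintype.one_lt_card
  have hMcard : Fintype.card Fˣ = M := by rw [Fintype.card_units]
  have hM0 : 0 < M := hMcard ▸ Fintype.card_pos
  have hαord : orderOf α = M := by
    rw [orderOf_eq_card_of_forall_mem_zpowers hα]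
    rw [Nat.card_eq_fintype_card]
    exact hMcard
  -- divisibility facts
  have hn₁0 : 0 < n₁ := h₁ ▸ orderOf_pos g₁
  have hn₁M : n₁ ∣ M := by rw [← h₁, ← hMcard]; exact orderOf_dvd_card
  have hN₁n₁ : N₁ * n₁ = M := by rw [hN₁]; exact Nat.div_mul_cancel hn₁M
  have hq1M : (q - 1) ∣ M := by
    rw [hMdef, hr]
    simpa using Nat.sub_dvd_pow_sub_pow q 1 m
  have hN₀q : N₀ * (q - 1) = M := by rw [hN₀]; exact Nat.div_mul_cancel hq1M
  have hN₀M : N₀ ∣ M := ⟨q - 1, hN₀q.symm⟩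
  have hN₁M : N₁ ∣ M := ⟨n₁, hN₁n₁.symm⟩
  have hd₁N₀ : d₁ ∣ N₀ := hd₁ ▸ Nat.gcd_dvd_left _ _
  have hd₁N₁ : d₁ ∣ N₁ := hd₁ ▸ Nat.gcd_dvd_right _ _
  have hd₁M : d₁ ∣ M := hd₁N₀.trans hN₀M
  have hN₀0 : 0 < N₀ := by
    by_contra h
    push_neg at h
    interval_cases N₀
    simp at hN₀q
    omega
  have hd₁0 : 0 < d₁ := by
    rw [hd₁]; exact Nat.gcd_pos_of_pos_left _ hN₀0
  have hN₁0 : 0 < N₁ := by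
    rcases Nat.eq_zero_or_pos N₁ with h | h
    · rw [h] at hN₁n₁; simp at hN₁n₁; omega
    · exact h
  set H : Subgroup Fˣ := zpowers (α ^ d₁) with hHdef
  have hordpow : ∀ k : ℕ, k ∣ M → 0 < k → orderOf (α ^ k) = M / k := by
    intro k hk hk0
    rw [orderOf_pow' α hk0.ne', hαord, Nat.gcd_eq_right hk]
  have hordH : orderOf (α ^ d₁) = M / d₁ := hordpow d₁ hd₁M hd₁0
  set u : Kˣ →* Fˣ := Units.map (algebraMap K F).toMonoidHom with hudef
  have hu_inj : Function.Injective u := Units.map_injective (algebraMap K F).injective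
  set A : Subgroup Fˣ := u.range with hAdef
  set B : Subgroup Fˣ := zpowers g₁ with hBdef
  have hcardA : Nat.card A = q - 1 := by
    rw [Nat.card_congr (MonoidHom.ofInjective hu_inj).toEquiv.symm, Nat.card_eq_fintype_card,
      Fintype.card_units]
  have hcardB : Nat.card B = n₁ := by rw [hBdef, Nat.card_zpowers, h₁]
  have hA : A = zpowers (α ^ N₀) := by
    apply subgroup_eq_of_card_eq
    rw [hcardA, Nat.card_zpowers, hordpow N₀ hN₀M hN₀0,
      Nat.div_eq_of_eq_mul_right hN₀0 hN₀q.symm]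
  have hB : B = zpowers (α ^ N₁) := by
    apply subgroup_eq_of_card_eq
    rw [hcardB, Nat.card_zpowers, hordpow N₁ hN₁M hN₁0,
      Nat.div_eq_of_eq_mul_right hN₁0 hN₁n₁.symm]
  have hsup : zpowers (α ^ N₀) ⊔ zpowers (α ^ N₁) = H := by
    apply le_antisymm
    · apply sup_le
      · rw [zpowers_le]
        exact ⟨((N₀ / d₁ : ℕ) : ℤ), by
          show (α ^ d₁) ^ ((N₀ / d₁ : ℕ) : ℤ) = α ^ N₀
          rw [zpow_natCast, ← pow_mul, Nat.mul_div_cancel' hd₁N₀]⟩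
      · rw [zpowers_le]
        exact ⟨((N₁ / d₁ : ℕ) : ℤ), by
          show (α ^ d₁) ^ ((N₁ / d₁ : ℕ) : ℤ) = α ^ N₁
          rw [zpow_natCast, ← pow_mul, Nat.mul_div_cancel' hd₁N₁]⟩
    · rw [hHdef, zpowers_le]
      have hbez : (d₁ : ℤ) = N₀ * Nat.gcdA N₀ N₁ + N₁ * Nat.gcdB N₀ N₁ := by
        rw [hd₁]; exact Nat.gcd_eq_gcd_ab N₀ N₁
      have hmem : (α : Fˣ) ^ (d₁ : ℤ) ∈ zpowers (α ^ N₀) ⊔ zpowers (α ^ N₁) := by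
        rw [hbez, zpow_add, zpow_mul, zpow_mul]
        refine mul_mem (zpow_mem ?_ _) (zpow_mem ?_ _)
        · exact (le_sup_left : zpowers (α ^ N₀) ≤ _) (by rw [zpow_natCast]; exact mem_zpowers _)
        · exact (le_sup_right : zpowers (α ^ N₁) ≤ _) (by rw [zpow_natCast]; exact mem_zpowers _)
      simpa [zpow_natCast] using hmem
  set μ : (Kˣ × B) →* Fˣ :=
    (u.comp (MonoidHom.fst Kˣ B)) * (B.subtype.comp (MonoidHom.snd Kˣ B)) with hμdef
  have hμap : ∀ (y : Kˣ) (b' : B), μ (y, b') = u y * ↑b' := fun _ _ => rfl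
  have hrange : μ.range = H := by
    have h1 : μ.range = A ⊔ B := by
      apply le_antisymm
      · rintro x ⟨⟨y, b'⟩, rfl⟩
        exact mul_mem (mem_sup_left ⟨y, rfl⟩) (mem_sup_right b'.2)
      · apply sup_le
        · rintro x ⟨y, rfl⟩
          exact ⟨(y, 1), by simp [hμap]⟩
        · intro x hx
          exact ⟨(1, ⟨x, hx⟩), by simp [hμap]⟩
    rw [h1, hA, hB, hsup]
  set kk : ℕ := Nat.card μ.ker with hkkdef
  have hcount : (q - 1) * n₁ = (M / d₁) * kk := by
    have hiso : Nat.card ((Kˣ × B) ⧸ μ.ker) = Nat.card μ.range :=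
      Nat.card_congr (QuotientGroup.quotientKerEquivRange μ).toEquiv
    have := Subgroup.card_eq_card_quotient_mul_card_subgroup (α := Kˣ × B) μ.ker
    rw [Nat.card_prod, hiso, hrange] at this
    rw [← hkkdef] at this
    have hKu : Nat.card Kˣ = q - 1 := by
      rw [Nat.card_eq_fintype_card, Fintype.card_units]
    have hHcard : Nat.card H = M / d₁ := by rw [hHdef, Nat.card_zpowers, hordH]
    rw [hKu, hcardB, hHcard] at this
    exact this
  have hkN₁ : kk * N₁ = (q - 1) * d₁ := by
    have h2 : (q - 1) * n₁ * d₁ = N₁ * n₁ * kk := by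
      calc (q - 1) * n₁ * d₁ = (M / d₁) * kk * d₁ := by rw [hcount]
        _ = (M / d₁ * d₁) * kk := by ring
        _ = M * kk := by rw [Nat.div_mul_cancel hd₁M]
        _ = N₁ * n₁ * kk := by rw [hN₁n₁]
    have h3 : n₁ * ((q - 1) * d₁) = n₁ * (kk * N₁) := by
      calc n₁ * ((q - 1) * d₁) = (q - 1) * n₁ * d₁ := by ring
        _ = N₁ * n₁ * kk := h2
        _ = n₁ * (kk * N₁) := by ring
    exact (Nat.eq_of_mul_eq_mul_left hn₁0 h3).symm
  -- Gauss period as a sum over H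
  have hHsum : ∀ w : Fˣ, (∑ h ∈ univ.filter (· ∈ H), psi p F ((w * h : Fˣ) : F))
      = ∑ t ∈ range (M / d₁), psi p F ((w * (α ^ d₁) ^ t : Fˣ) : F) := by
    intro w
    have hsfz := sum_filter_zpowers (α ^ d₁) (fun h => psi p F ((w * h : Fˣ) : F))
    rw [hordH] at hsfz
    exact hsfz
  have hgp : gaussPeriod p F α d₁ j
      = ∑ h ∈ univ.filter (· ∈ H), psi p F ((α ^ j * h : Fˣ) : F) := by
    rw [hHsum (α ^ j), gaussPeriod]
    refine Finset.sum_congr rfl fun t _ => ?_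
    congr 2
    rw [pow_add, pow_mul]
  obtain ⟨t₀, hat₀⟩ := ha
  have hasum : (∑ h ∈ univ.filter (· ∈ H), psi p F (a * (h : F)))
      = gaussPeriod p F α d₁ j := by
    set c : Fˣ := (α ^ d₁) ^ t₀ with hcdef
    have hcH : c ∈ H := pow_mem (mem_zpowers (α ^ d₁)) t₀
    have hac : ∀ h : Fˣ, a * (h : F) = ((α ^ j * (c * h) : Fˣ) : F) := by
      intro h
      rw [hat₀, hcdef, ← Units.val_mul]
      congr 1
      rw [← mul_assoc, ← pow_mul, ← pow_add]
    rw [Finset.sum_congr rfl fun h _ => by rw [hac h]]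
    rw [hgp]
    refine Finset.sum_bij' (fun h _ => c * h) (fun h _ => c⁻¹ * h) ?_ ?_ ?_ ?_ ?_
    · intro h hh
      rw [mem_filter] at hh ⊢
      exact ⟨mem_univ _, mul_mem hcH hh.2⟩
    · intro h hh
      rw [mem_filter] at hh ⊢
      exact ⟨mem_univ _, mul_mem (inv_mem hcH) hh.2⟩
    · intro h _; exact inv_mul_cancel_left c h
    · intro h _; exact mul_inv_cancel_left c h
    · intro h _; rfl
  -- orthogonality in F
  have hq0 : (q : ℂ) ≠ 0 := Nat.cast_ne_zero.mpr (by omega)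
  have horth : ∀ x : F, (∑ y : K, psi p F (algebraMap K F y * x))
      = if Algebra.trace K F x = 0 then (q : ℂ) else 0 := by
    intro x
    have hpt : ∀ y : K, psi p F (algebraMap K F y * x)
        = psi p K (y * Algebra.trace K F x) := by
      intro y
      apply psi_congr
      rw [← Algebra.trace_trace (S := K) (x := algebraMap K F y * x)]
      congr 1
      rw [← Algebra.smul_def, LinearMap.map_smul, smul_eq_mul]
    simp_rw [hpt]
    rw [sum_psi_mul p K (Algebra.trace K F x)]
  -- indicator formula
  have hstep : ∀ x : F, (if Algebra.trace K F x ≠ 0 then (1 : ℂ) else 0)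
      = 1 - (q : ℂ)⁻¹ * ∑ y : K, psi p F (algebraMap K F y * x) := by
    intro x
    rw [horth x]
    by_cases h : Algebra.trace K F x = 0
    · simp [h]
    · simp [h]
  -- the U function
  set U : ℕ → ℂ := fun t => ∑ v : Kˣ, psi p F (a * ((u v * g₁ ^ t : Fˣ) : F)) with hUdef
  have hg₁n₁ : g₁ ^ n₁ = 1 := by rw [← h₁]; exact pow_orderOf_eq_one g₁
  have hperiod : ∀ t, U (t + n₁) = U t := by
    intro t
    refine Finset.sum_congr rfl fun v _ => ?_
    congr 3
    rw [pow_add, hg₁n₁, mul_one]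
  have hsplit : ∀ t : ℕ, (∑ y : K, psi p F (algebraMap K F y * (a * (g₁ : F) ^ t)))
      = 1 + U t := by
    intro t
    rw [sum_K_split (fun y => psi p F (algebraMap K F y * (a * (g₁ : F) ^ t)))]
    congr 1
    · rw [map_zero, zero_mul, psi_zero]
    · refine Finset.sum_congr rfl fun v _ => ?_
      congr 1
      have hval : ((u v * g₁ ^ t : Fˣ) : F) = algebraMap K F ↑v * (g₁ : F) ^ t := by
        rw [Units.val_mul, Units.val_pow_eq_pow_val]
        congr 1
      rw [hval]
      ring
  -- the group-theoretic evaluation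
  have hgroup : (∑ t ∈ range n₁, U t) = (kk : ℂ) * gaussPeriod p F α d₁ j := by
    have hfin : IsOfFinOrder g₁ := isOfFinOrder_of_finite g₁
    have hswap : (∑ t ∈ range n₁, U t)
        = ∑ v : Kˣ, ∑ t ∈ range n₁, psi p F (a * ((u v * g₁ ^ t : Fˣ) : F)) :=
      Finset.sum_comm
    have hinner : ∀ v : Kˣ, (∑ t ∈ range n₁, psi p F (a * ((u v * g₁ ^ t : Fˣ) : F)))
        = ∑ b' : B, psi p F (a * ((u v * ↑b' : Fˣ) : F)) := by
      intro v
      rw [← h₁, ← Fin.sum_univ_eq_sum_range]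
      exact Fintype.sum_equiv (finEquivZPowers hfin)
        (fun i => psi p F (a * ((u v * g₁ ^ (i : ℕ) : Fˣ) : F)))
        (fun b' => psi p F (a * ((u v * ↑b' : Fˣ) : F)))
        (fun i => by rw [finEquivZPowers_apply])
    rw [hswap]
    simp_rw [hinner]
    have hps : (∑ v : Kˣ, ∑ b' : B, psi p F (a * ((u v * ↑b' : Fˣ) : F)))
        = ∑ x : Kˣ × B, psi p F (a * ((u x.1 * ↑x.2 : Fˣ) : F)) := by
      rw [Fintype.sum_prod_type]
    rw [hps]
    have hps2 : (∑ x : Kˣ × B, psi p F (a * ((u x.1 * ↑x.2 : Fˣ) : F)))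
        = ∑ x : Kˣ × B, (fun z : Fˣ => psi p F (a * (z : F))) (μ x) := by
      refine Finset.sum_congr rfl fun x _ => ?_
      rw [hμap x.1 x.2]
    rw [hps2, sum_comp_hom μ (fun z : Fˣ => psi p F (a * (z : F)))]
    have hfilt : (univ.filter (· ∈ μ.range)) = (univ.filter (· ∈ H)) := by
      ext x
      simp only [mem_filter, mem_univ, true_and]
      rw [hrange]
    rw [hfilt, hasum]
  -- assembling
  have hcast : ((kk : ℂ)) * (N₁ : ℂ) = ((q : ℂ) - 1) * (d₁ : ℂ) := by
    have := congrArg (Nat.cast (R := ℂ)) hkN₁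
    push_cast [Nat.cast_sub hq2.le] at this
    exact this
  have hnorm : (hammingNorm (fun t : Fin (n₁ * n₂) =>
        Algebra.trace K F (a * (g₁ : F) ^ (t : ℕ) + 0 * (g₂ : F) ^ (t : ℕ))) : ℂ)
      = ∑ t ∈ range (n₁ * n₂),
          (if Algebra.trace K F (a * (g₁ : F) ^ t) ≠ 0 then (1 : ℂ) else 0) := by
    rw [hammingNorm, Finset.card_filter]
    push_cast
    rw [← Fin.sum_univ_eq_sum_range
      (fun t : ℕ => if Algebra.trace K F (a * (g₁ : F) ^ t) ≠ 0 then (1 : ℂ) else 0) (n₁ * n₂)]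
    refine Finset.sum_congr rfl fun t _ => ?_
    rw [zero_mul, add_zero]
  rw [hnorm]
  have hrw : ∀ t ∈ range (n₁ * n₂),
      (if Algebra.trace K F (a * (g₁ : F) ^ t) ≠ 0 then (1 : ℂ) else 0)
      = (1 - (q : ℂ)⁻¹) - (q : ℂ)⁻¹ * U t := by
    intro t _
    rw [hstep, hsplit]
    ring
  rw [Finset.sum_congr rfl hrw, Finset.sum_sub_distrib, ← Finset.mul_sum,
    sum_range_mul_of_periodic U n₁ n₂ hperiod, hgroup, Finset.sum_const, Finset.card_range,
    nsmul_eq_mul]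
  have hN₁C : (N₁ : ℂ) ≠ 0 := Nat.cast_ne_zero.mpr hN₁0.ne'
  push_cast
  field_simp
  linear_combination (-(n₂ : ℂ) * gaussPeriod p F α d₁ j) * hcast
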